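/- Let c, d ∈ ℝ³, set v = c × d (cross product), and set b = (v₂v₃, v₁v₃, v₁v₂) ∈ ℝ³. Then: (1) c₁b₂b₃ + c₂b₁b₃ + c₃b₁b₂ = 0 and d₁b₂b₃ + d₂b₁b₃ + d₃b₁b₂ = 0; (2) if moreover v ≠ 0 and w ∈ ℝ³ has all three coordinates nonzero and satisfies c₁w₂w₃ + c₂w₁w₃ + c₃w₁w₂ = 0 and d₁w₂w₃ + d₂w₁w₃ + d₃w₁w₂ = 0, then there exists a nonzero real scalar λ with w = λ·b. -/

import Mathlib

open Matrix

/-- The cross product on ℝ³. -/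
def cross3 (u v : Fin 3 → ℝ) : Fin 3 → ℝ :=
  ![u 1 * v 2 - u 2 * v 1, u 2 * v 0 - u 0 * v 2, u 0 * v 1 - u 1 * v 0]

/-- Coordinate form of Lemma 23: two conics through the coordinate points, with
coefficient vectors `c` and `d`, meet in the fourth point
`f_q(c × d) = (v₂v₃, v₁v₃, v₁v₂)` where `v = c × d`; and (2) this fourth point
is the unique common point having all coordinates nonzero. -/
theorem fourth_intersection_of_conics (c d : Fin 3 → ℝ) :
    let v := cross3 c d
    let b : Fin 3 → ℝ := ![v 1 * v 2, v 0 * v 2, v 0 * v 1]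
    (c 0 * b 1 * b 2 + c 1 * b 0 * b 2 + c 2 * b 0 * b 1 = 0 ∧
     d 0 * b 1 * b 2 + d 1 * b 0 * b 2 + d 2 * b 0 * b 1 = 0) ∧
    (v ≠ 0 → ∀ w : Fin 3 → ℝ, (∀ i, w i ≠ 0) →
      c 0 * w 1 * w 2 + c 1 * w 0 * w 2 + c 2 * w 0 * w 1 = 0 →
      d 0 * w 1 * w 2 + d 1 * w 0 * w 2 + d 2 * w 0 * w 1 = 0 →
      ∃ lam : ℝ, lam ≠ 0 ∧ w = lam • b) := by
  intro v b
  have hv0 : v 0 = c 1 * d 2 - c 2 * d 1 := rfl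
  have hv1 : v 1 = c 2 * d 0 - c 0 * d 2 := rfl
  have hv2 : v 2 = c 0 * d 1 - c 1 * d 0 := rfl
  have hb0 : b 0 = v 1 * v 2 := rfl
  have hb1 : b 1 = v 0 * v 2 := rfl
  have hb2 : b 2 = v 0 * v 1 := rfl
  constructor
  · constructor
    · rw [hb0, hb1, hb2, hv0, hv1, hv2]; ring
    · rw [hb0, hb1, hb2, hv0, hv1, hv2]; ring
  · intro hv w hw e1 e2
    have hw0 := hw 0
    have hw1 := hw 1
    have hw2 := hw 2
    have h01 : v 0 * (w 0 * w 2) = v 1 * (w 1 * w 2) := by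
      rw [hv0, hv1]; linear_combination d 2 * e1 - c 2 * e2
    have h12 : v 1 * (w 0 * w 1) = v 2 * (w 0 * w 2) := by
      rw [hv1, hv2]; linear_combination d 0 * e1 - c 0 * e2
    have hne : v 0 ≠ 0 ∨ v 1 ≠ 0 ∨ v 2 ≠ 0 := by
      by_contra h
      push_neg at h
      apply hv
      funext i
      fin_cases i <;> simp [h.1, h.2.1, h.2.2]
    have q01 : v 0 = 0 ↔ v 1 = 0 := by
      constructor <;> intro h
      · have : v 1 * (w 1 * w 2) = 0 := by rw [← h01, h]; ring
        exact (mul_eq_zero.mp this).resolve_right (mul_ne_zero hw1 hw2)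
      · have : v 0 * (w 0 * w 2) = 0 := by rw [h01, h]; ring
        exact (mul_eq_zero.mp this).resolve_right (mul_ne_zero hw0 hw2)
    have q12 : v 1 = 0 ↔ v 2 = 0 := by
      constructor <;> intro h
      · have : v 2 * (w 0 * w 2) = 0 := by rw [← h12, h]; ring
        exact (mul_eq_zero.mp this).resolve_right (mul_ne_zero hw0 hw2)
      · have : v 1 * (w 0 * w 1) = 0 := by rw [h12, h]; ring
        exact (mul_eq_zero.mp this).resolve_right (mul_ne_zero hw0 hw1)
    obtain ⟨hv0n, hv1n, hv2n⟩ : v 0 ≠ 0 ∧ v 1 ≠ 0 ∧ v 2 ≠ 0 := by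
      rcases hne with h | h | h
      · exact ⟨h, fun h1 => h (q01.mpr h1), fun h2 => h (q01.mpr (q12.mpr h2))⟩
      · exact ⟨fun h0 => h (q01.mp h0), h, fun h2 => h (q12.mpr h2)⟩
      · exact ⟨fun h0 => h (q12.mp (q01.mp h0)), fun h1 => h (q12.mp h1), h⟩
    have key1 : w 1 * v 1 = w 0 * v 0 := mul_right_cancel₀ hw2 (by linear_combination -h01)
    have key2 : w 2 * v 2 = w 0 * v 0 := by
      have : w 2 * v 2 = w 1 * v 1 := mul_left_cancel₀ hw0 (by linear_combination -h12)
      rw [this, key1]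
    refine ⟨w 0 / (v 1 * v 2), div_ne_zero hw0 (mul_ne_zero hv1n hv2n), ?_⟩
    funext i
    fin_cases i
    · show w 0 = w 0 / (v 1 * v 2) * b 0
      rw [hb0]; field_simp
    · show w 1 = w 0 / (v 1 * v 2) * b 1
      rw [hb1]; field_simp
      linear_combination key1
    · show w 2 = w 0 / (v 1 * v 2) * b 2
      rw [hb2]; field_simp
      linear_combination key2
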